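/- Let S̄ ⊆ Ω with |S̄| = v − s, where Ω is the set of vectors in (Z_4)^n with first odd entry 1. Define F_3 = 3·2^n Σ_{u ∈ Δ_0} σ̄_u² + Σ_{u ∈ (Z_4)^n} σ̄_u³, where σ̄_u = Σ_{g ∈ S̄} (i^{u·g} + i^{-u·g}) and Δ_0 is the set of all-even vectors. Then F_3 ≤ 3·2^{2n+2}(v − s)², with equality if and only if S̄ is even (every pairwise sum of elements of S̄ has all entries even). -/

import Mathlib

open Complex Finset

noncomputable def ipow (a : ZMod 4) : ℂ := Complex.I ^ a.val

def isOddZ4 (a : ZMod 4) : Prop := a = 1 ∨ a = 3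

instance : DecidablePred isOddZ4 := fun a => by unfold isOddZ4; infer_instance

/-- `g` has an odd entry and its first (lowest-index) odd entry equals 1. -/
def inOmega {n : ℕ} (g : Fin n → ZMod 4) : Prop :=
  ∃ i : Fin n, g i = 1 ∧ ∀ j : Fin n, j < i → ¬ isOddZ4 (g j)

instance {n : ℕ} : DecidablePred (inOmega (n := n)) := fun g => by
  unfold inOmega; infer_instance

def allEven {n : ℕ} (u : Fin n → ZMod 4) : Prop := ∀ i, u i = 0 ∨ u i = 2

instance {n : ℕ} : DecidablePred (allEven (n := n)) := fun u => by
  unfold allEven; infer_instance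

def dot4 {n : ℕ} (u w : Fin n → ZMod 4) : ZMod 4 := ∑ i, u i * w i

lemma I_pow_mod (x : ℕ) : Complex.I ^ (x % 4) = Complex.I ^ x := by
  conv_rhs => rw [← Nat.mod_add_div x 4]
  rw [pow_add, pow_mul, Complex.I_pow_four, one_pow, mul_one]

lemma ipow_zero : ipow 0 = 1 := by simp [ipow]

lemma ipow_add (a b : ZMod 4) : ipow (a + b) = ipow a * ipow b := by
  unfold ipow
  rw [ZMod.val_add, I_pow_mod, pow_add]

lemma ipow_sum {ι : Type*} (s : Finset ι) (f : ι → ZMod 4) :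
    ipow (∑ i ∈ s, f i) = ∏ i ∈ s, ipow (f i) := by
  classical
  induction s using Finset.induction with
  | empty => simp [ipow_zero]
  | insert a s h ih => simp [Finset.sum_insert h, Finset.prod_insert h, ipow_add, ih]

lemma zmod4_sum (f : ZMod 4 → ℂ) : ∑ a : ZMod 4, f a = f 0 + f 1 + f 2 + f 3 := by
  rw [show (Finset.univ : Finset (ZMod 4)) = {0, 1, 2, 3} from by decide,
    Finset.sum_insert (by decide), Finset.sum_insert (by decide), Finset.sum_insert (by decide),
    Finset.sum_singleton]
  ring

lemma vfacts : (ZMod.val (0:ZMod 4) = 0) ∧ (ZMod.val (1:ZMod 4) = 1) ∧ (ZMod.val (2:ZMod 4) = 2)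
    ∧ (ZMod.val (3:ZMod 4) = 3) := by decide

lemma ipow_one : ipow 1 = Complex.I := by rw [ipow, vfacts.2.1]; norm_num
lemma ipow_two : ipow 2 = -1 := by rw [ipow, vfacts.2.2.1]; exact Complex.I_sq
lemma ipow_three : ipow 3 = -Complex.I := by
  rw [ipow, vfacts.2.2.2, pow_succ, Complex.I_sq]; ring

lemma ipow_four : ipow 4 = 1 := by rw [show (4:ZMod 4) = 0 from by decide, ipow_zero]
lemma ipow_six : ipow 6 = -1 := by rw [show (6:ZMod 4) = 2 from by decide, ipow_two]
lemma ipow_nine : ipow 9 = Complex.I := by rw [show (9:ZMod 4) = 1 from by decide, ipow_one]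

lemma zmod4_cases (x : ZMod 4) : x = 0 ∨ x = 1 ∨ x = 2 ∨ x = 3 := by revert x; decide

lemma sum_ipow_all (c : ZMod 4) : ∑ a : ZMod 4, ipow (a * c) = if c = 0 then 4 else 0 := by
  rw [zmod4_sum]
  rcases zmod4_cases c with rfl | rfl | rfl | rfl <;>
    norm_num [show (1*1 : ZMod 4) = 1 from by decide, show (2*1 : ZMod 4) = 2 from by decide,
      show (3*1 : ZMod 4) = 3 from by decide, show (1*2 : ZMod 4) = 2 from by decide,
      show (2*2 : ZMod 4) = 0 from by decide, show (3*2 : ZMod 4) = 2 from by decide,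
      show (1*3 : ZMod 4) = 3 from by decide, show (2*3 : ZMod 4) = 2 from by decide,
      show (3*3 : ZMod 4) = 1 from by decide,
      show ((1:ZMod 4) = 0) ↔ False from by decide, show ((2:ZMod 4) = 0) ↔ False from by decide,
      show ((3:ZMod 4) = 0) ↔ False from by decide,
      show (4:ZMod 4) = 0 from by decide, show (6:ZMod 4) = 2 from by decide,
      show (9:ZMod 4) = 1 from by decide,
      ipow_zero, ipow_one, ipow_two, ipow_three, ipow_four, ipow_six, ipow_nine] <;> ring

lemma sum_ipow_even (c : ZMod 4) :
    ∑ a ∈ ({0,2} : Finset (ZMod 4)), ipow (a * c) = if c = 0 ∨ c = 2 then 2 else 0 := by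
  rw [Finset.sum_insert (by decide), Finset.sum_singleton]
  rcases zmod4_cases c with rfl | rfl | rfl | rfl <;>
    norm_num [show (2*1 : ZMod 4) = 2 from by decide, show (2*2 : ZMod 4) = 0 from by decide,
      show (2*3 : ZMod 4) = 2 from by decide,
      show ((1:ZMod 4) = 0) ↔ False from by decide, show ((1:ZMod 4) = 2) ↔ False from by decide,
      show ((3:ZMod 4) = 0) ↔ False from by decide, show ((3:ZMod 4) = 2) ↔ False from by decide,
      show ((2:ZMod 4) = 0) ↔ False from by decide,
      show (4:ZMod 4) = 0 from by decide, show (6:ZMod 4) = 2 from by decide,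
      ipow_zero, ipow_one, ipow_two, ipow_three, ipow_four, ipow_six, ipow_nine]


lemma char_sum_all {n : ℕ} (h : Fin n → ZMod 4) :
    ∑ u : Fin n → ZMod 4, ipow (dot4 u h) = if h = 0 then (4:ℂ)^n else 0 := by
  have key : ∀ u : Fin n → ZMod 4, ipow (dot4 u h) = ∏ i, ipow (u i * h i) := fun u =>
    ipow_sum _ _
  simp only [key]
  rw [← Fintype.piFinset_univ,
    ← Finset.prod_univ_sum (fun _ : Fin n => (Finset.univ : Finset (ZMod 4))) (fun i a => ipow (a * h i))]
  simp only [sum_ipow_all]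
  by_cases hh : h = 0
  · subst hh; simp
  · rw [if_neg hh]
    obtain ⟨i, hi⟩ : ∃ i, h i ≠ 0 := by
      by_contra hc; push_neg at hc; exact hh (funext hc)
    exact Finset.prod_eq_zero (Finset.mem_univ i) (by rw [if_neg hi])

lemma char_sum_even {n : ℕ} (h : Fin n → ZMod 4) :
    ∑ u ∈ Finset.univ.filter (allEven (n := n)), ipow (dot4 u h)
      = if allEven h then (2:ℂ)^n else 0 := by
  have hset : Finset.univ.filter (allEven (n := n))
      = Fintype.piFinset (fun _ : Fin n => ({0,2} : Finset (ZMod 4))) := by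
    ext u
    simp [allEven, Fintype.mem_piFinset]
  have key : ∀ u : Fin n → ZMod 4, ipow (dot4 u h) = ∏ i, ipow (u i * h i) := fun u =>
    ipow_sum _ _
  rw [hset]
  simp only [key]
  rw [← Finset.prod_univ_sum (fun _ : Fin n => ({0,2} : Finset (ZMod 4))) (fun i a => ipow (a * h i))]
  simp only [sum_ipow_even]
  by_cases hh : allEven h
  · rw [if_pos hh]
    rw [Finset.prod_congr rfl (fun i _ => if_pos (hh i))]
    simp
  · rw [if_neg hh]
    obtain ⟨i, hi⟩ : ∃ i, ¬(h i = 0 ∨ h i = 2) := by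
      by_contra hc; push_neg at hc
      exact hh (fun i => (hc i).imp_left id)
    exact Finset.prod_eq_zero (Finset.mem_univ i) (by rw [if_neg hi])


-- ### pointwise ZMod 4 facts
lemma even_pair : ∀ e1 e2 a b : ZMod 4, (e1 = 1 ∨ e1 = 3) → (e2 = 1 ∨ e2 = 3) →
    ((e1*a + e2*b = 0 ∨ e1*a + e2*b = 2) ↔ (a+b = 0 ∨ a+b = 2)) := by decide

lemma cross_pt : ∀ e1 e2 e3 a b : ZMod 4, (e1 = 1 ∨ e1 = 3) → (e2 = 1 ∨ e2 = 3) →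
    (e3 = 1 ∨ e3 = 3) → e1*a + e2*b + e3*1 = 0 → ¬(a+b = 0 ∨ a+b = 2) := by decide

lemma cancel_pt : ∀ e a b : ZMod 4, (e = 1 ∨ e = 3) → e*a = e*b → a = b := by decide

-- ### setup
variable {n : ℕ}

def phi (p : (Fin n → ZMod 4) × ZMod 4) : Fin n → ZMod 4 := p.2 • p.1

def E2 : Finset (ZMod 4) := {1, 3}

lemma mem_E2 : ∀ e : ZMod 4, e ∈ E2 ↔ (e = 1 ∨ e = 3) := by decide

lemma dot4_smul (u g : Fin n → ZMod 4) (c : ZMod 4) : dot4 u (c • g) = c * dot4 u g := by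
  simp [dot4, Finset.mul_sum, mul_left_comm]

lemma dot4_add (u x y : Fin n → ZMod 4) : dot4 u (x + y) = dot4 u x + dot4 u y := by
  simp [dot4, mul_add, Finset.sum_add_distrib]

lemma sigma_eq (Sb : Finset (Fin n → ZMod 4)) (u : Fin n → ZMod 4) :
    ∑ g ∈ Sb, (ipow (dot4 u g) + ipow (-(dot4 u g)))
      = ∑ p ∈ Sb ×ˢ E2, ipow (dot4 u (phi p)) := by
  rw [Finset.sum_product]
  refine Finset.sum_congr rfl (fun g _ => ?_)
  rw [show E2 = {1,3} from rfl, Finset.sum_insert (by decide), Finset.sum_singleton]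
  simp only [phi, dot4_smul, one_mul]
  congr 1
  rw [show (3:ZMod 4) = -1 from by decide, neg_one_mul]

lemma sum_mul_sum_prod {A B : Type*} [DecidableEq A] [DecidableEq B]
    (s : Finset A) (t : Finset B) (f : A → ℂ) (g : B → ℂ) :
    (∑ a ∈ s, f a) * (∑ b ∈ t, g b) = ∑ q ∈ s ×ˢ t, f q.1 * g q.2 := by
  rw [Finset.sum_mul_sum, Finset.sum_product (f := fun q => f q.1 * g q.2)]

lemma sum_sq_prod {A : Type*} [DecidableEq A] (s : Finset A) (f : A → ℂ) :
    (∑ a ∈ s, f a) ^ 2 = ∑ q ∈ s ×ˢ s, f q.1 * f q.2 := by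
  rw [sq, sum_mul_sum_prod]

lemma sum_cube_prod {A : Type*} [DecidableEq A] (s : Finset A) (f : A → ℂ) :
    (∑ a ∈ s, f a) ^ 3 = ∑ q ∈ s ×ˢ (s ×ˢ s), f q.1 * (f q.2.1 * f q.2.2) := by
  have : (∑ a ∈ s, f a) ^ 3 = (∑ a ∈ s, f a) * (∑ a ∈ s, f a) ^ 2 := by ring
  rw [this, sum_sq_prod, sum_mul_sum_prod]

-- ### the two sum identities
lemma cube_eq (Sb : Finset (Fin n → ZMod 4)) :
    ∑ u : Fin n → ZMod 4, (∑ p ∈ Sb ×ˢ E2, ipow (dot4 u (phi p))) ^ 3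
      = (4:ℂ)^n * ((((Sb ×ˢ E2) ×ˢ ((Sb ×ˢ E2) ×ˢ (Sb ×ˢ E2))).filter
          (fun q => phi q.1 + phi q.2.1 + phi q.2.2 = 0)).card : ℂ) := by
  have expand : ∀ u : Fin n → ZMod 4,
      (∑ p ∈ Sb ×ˢ E2, ipow (dot4 u (phi p))) ^ 3
        = ∑ q ∈ (Sb ×ˢ E2) ×ˢ ((Sb ×ˢ E2) ×ˢ (Sb ×ˢ E2)),
            ipow (dot4 u (phi q.1 + phi q.2.1 + phi q.2.2)) := by
    intro u
    rw [sum_cube_prod]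
    refine Finset.sum_congr rfl (fun q _ => ?_)
    rw [dot4_add, dot4_add, ipow_add, ipow_add, mul_assoc]
  simp only [expand]
  rw [Finset.sum_comm]
  simp only [char_sum_all]
  rw [← Finset.sum_filter, Finset.sum_const, nsmul_eq_mul, mul_comm]

lemma sq_eq (Sb : Finset (Fin n → ZMod 4)) :
    ∑ u ∈ Finset.univ.filter (allEven (n := n)),
        (∑ p ∈ Sb ×ˢ E2, ipow (dot4 u (phi p))) ^ 2
      = (2:ℂ)^n * ((((Sb ×ˢ E2) ×ˢ (Sb ×ˢ E2)).filter
          (fun q => allEven (phi q.1 + phi q.2))).card : ℂ) := by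
  have expand : ∀ u : Fin n → ZMod 4,
      (∑ p ∈ Sb ×ˢ E2, ipow (dot4 u (phi p))) ^ 2
        = ∑ q ∈ (Sb ×ˢ E2) ×ˢ (Sb ×ˢ E2), ipow (dot4 u (phi q.1 + phi q.2)) := by
    intro u
    rw [sum_sq_prod]
    refine Finset.sum_congr rfl (fun q _ => ?_)
    rw [dot4_add, ipow_add]
  simp only [expand]
  rw [Finset.sum_comm]
  simp only [char_sum_even]
  rw [← Finset.sum_filter, Finset.sum_const, nsmul_eq_mul, mul_comm]


lemma even_shift (g1 g2 : Fin n → ZMod 4) {e1 e2 : ZMod 4} (h1 : e1 = 1 ∨ e1 = 3)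
    (h2 : e2 = 1 ∨ e2 = 3) : allEven (e1 • g1 + e2 • g2) ↔ allEven (g1 + g2) := by
  unfold allEven
  refine forall_congr' fun i => ?_
  simpa [Pi.add_apply, Pi.smul_apply, smul_eq_mul] using
    even_pair e1 e2 (g1 i) (g2 i) h1 h2

lemma W2_card (Sb : Finset (Fin n → ZMod 4)) :
    (((Sb ×ˢ E2) ×ˢ (Sb ×ˢ E2)).filter (fun q => allEven (phi q.1 + phi q.2))).card
      = 4 * ((Sb ×ˢ Sb).filter (fun q => allEven (q.1 + q.2))).card := by
  have hcard : (((Sb ×ˢ Sb).filter (fun q => allEven (q.1 + q.2))) ×ˢ (E2 ×ˢ E2)).card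
      = 4 * ((Sb ×ˢ Sb).filter (fun q => allEven (q.1 + q.2))).card := by
    rw [Finset.card_product, Finset.card_product]
    rw [show E2.card = 2 from rfl]; ring
  rw [← hcard]
  refine Finset.card_nbij' (fun q => ((q.1.1, q.2.1), (q.1.2, q.2.2)))
    (fun r => ((r.1.1, r.2.1), (r.1.2, r.2.2))) ?_ ?_ ?_ ?_
  · rintro ⟨⟨g1, e1⟩, ⟨g2, e2⟩⟩ hq
    simp only [Finset.mem_coe, Finset.mem_filter, Finset.mem_product] at hq ⊢
    obtain ⟨⟨⟨hg1, he1⟩, hg2, he2⟩, hall⟩ := hq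
    rw [show phi (g1, e1) = e1 • g1 from rfl, show phi (g2, e2) = e2 • g2 from rfl] at hall
    exact ⟨⟨⟨hg1, hg2⟩, (even_shift g1 g2 ((mem_E2 e1).1 he1) ((mem_E2 e2).1 he2)).1 hall⟩,
      he1, he2⟩
  · rintro ⟨⟨g1, g2⟩, ⟨e1, e2⟩⟩ hr
    simp only [Finset.mem_coe, Finset.mem_filter, Finset.mem_product] at hr ⊢
    obtain ⟨⟨⟨hg1, hg2⟩, hall⟩, he1, he2⟩ := hr
    refine ⟨⟨⟨hg1, he1⟩, hg2, he2⟩, ?_⟩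
    rw [show phi (g1, e1) = e1 • g1 from rfl, show phi (g2, e2) = e2 • g2 from rfl]
    exact (even_shift g1 g2 ((mem_E2 e1).1 he1) ((mem_E2 e2).1 he2)).2 hall
  · rintro ⟨⟨g1, e1⟩, ⟨g2, e2⟩⟩ _; rfl
  · rintro ⟨⟨g1, g2⟩, ⟨e1, e2⟩⟩ _; rfl

lemma Z3_le (Sb : Finset (Fin n → ZMod 4)) (hΩ : ∀ g ∈ Sb, inOmega g) :
    (((Sb ×ˢ E2) ×ˢ ((Sb ×ˢ E2) ×ˢ (Sb ×ˢ E2))).filter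
        (fun q => phi q.1 + phi q.2.1 + phi q.2.2 = 0)).card
      ≤ 8 * ((Sb ×ˢ Sb).filter (fun q => ¬ allEven (q.1 + q.2))).card := by
  have hcard : ((((Sb ×ˢ Sb).filter (fun q => ¬ allEven (q.1 + q.2))) ×ˢ (E2 ×ˢ (E2 ×ˢ E2))).card)
      = 8 * ((Sb ×ˢ Sb).filter (fun q => ¬ allEven (q.1 + q.2))).card := by
    rw [Finset.card_product, Finset.card_product, Finset.card_product]
    rw [show E2.card = 2 from rfl]; ring
  rw [← hcard]
  refine Finset.card_le_card_of_injOn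
    (fun q => ((q.1.1, q.2.1.1), (q.1.2, (q.2.1.2, q.2.2.2)))) ?_ ?_
  · rintro ⟨⟨g1, e1⟩, ⟨g2, e2⟩, ⟨g3, e3⟩⟩ hq
    simp only [Finset.mem_coe, Finset.mem_filter, Finset.mem_product] at hq ⊢
    obtain ⟨⟨⟨hg1, he1⟩, ⟨hg2, he2⟩, hg3, he3⟩, hz⟩ := hq
    refine ⟨⟨⟨hg1, hg2⟩, ?_⟩, he1, he2, he3⟩
    obtain ⟨i, hi1, -⟩ := hΩ g3 hg3
    intro hall
    have hzi := congrFun hz i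
    simp only [phi, Pi.add_apply, Pi.smul_apply, smul_eq_mul, Pi.zero_apply, hi1] at hzi
    exact cross_pt e1 e2 e3 (g1 i) (g2 i) ((mem_E2 e1).1 he1) ((mem_E2 e2).1 he2)
      ((mem_E2 e3).1 he3) hzi (by
        have := hall i
        simpa [Pi.add_apply] using this)
  · rintro ⟨⟨g1, e1⟩, ⟨g2, e2⟩, ⟨g3, e3⟩⟩ hq ⟨⟨g1', e1'⟩, ⟨g2', e2'⟩, ⟨g3', e3'⟩⟩ hq' heq
    simp only [Finset.coe_filter, Set.mem_setOf_eq, Finset.mem_product] at hq hq'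
    obtain ⟨⟨⟨hg1, he1⟩, ⟨hg2, he2⟩, hg3, he3⟩, hz⟩ := hq
    obtain ⟨⟨⟨hg1', he1'⟩, ⟨hg2', he2'⟩, hg3', he3'⟩, hz'⟩ := hq'
    simp only [Prod.mk.injEq] at heq
    obtain ⟨⟨rfl, rfl⟩, rfl, rfl, rfl⟩ := heq
    have h3 : e3 • g3 = e3 • g3' := by
      have a1 : e1 • g1 + e2 • g2 + e3 • g3 = 0 := hz
      have a2 : e1 • g1 + e2 • g2 + e3 • g3' = 0 := hz'
      have := a1.trans a2.symm
      exact add_left_cancel this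
    have : g3 = g3' := by
      funext i
      have := congrFun h3 i
      simp only [Pi.smul_apply, smul_eq_mul] at this
      exact cancel_pt e3 (g3 i) (g3' i) ((mem_E2 e3).1 he3) this
    simp [this]


open scoped ComplexOrder

/-- Theorem 1: F₃ ≤ 3·2^{2n+2}(v-s)², with equality iff S̄ is even. -/
theorem theorem_one {n : ℕ} (Sb : Finset (Fin n → ZMod 4))
    (hΩ : ∀ g ∈ Sb, inOmega g) :
    (3 * 2 ^ n *
        (∑ u ∈ Finset.univ.filter (allEven (n := n)),
          (∑ g ∈ Sb, (ipow (dot4 u g) + ipow (-(dot4 u g)))) ^ 2) +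
      (∑ u : Fin n → ZMod 4,
          (∑ g ∈ Sb, (ipow (dot4 u g) + ipow (-(dot4 u g)))) ^ 3)
      ≤ 3 * 2 ^ (2 * n + 2) * (Sb.card : ℂ) ^ 2) ∧
    ((3 * 2 ^ n *
        (∑ u ∈ Finset.univ.filter (allEven (n := n)),
          (∑ g ∈ Sb, (ipow (dot4 u g) + ipow (-(dot4 u g)))) ^ 2) +
      (∑ u : Fin n → ZMod 4,
          (∑ g ∈ Sb, (ipow (dot4 u g) + ipow (-(dot4 u g)))) ^ 3)
      = 3 * 2 ^ (2 * n + 2) * (Sb.card : ℂ) ^ 2)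
      ↔ ∀ g ∈ Sb, ∀ g' ∈ Sb, allEven (g + g')) := by
  classical
  set E : ℕ := ((Sb ×ˢ Sb).filter (fun q => allEven (q.1 + q.2))).card with hE
  set C : ℕ := ((Sb ×ˢ Sb).filter (fun q => ¬ allEven (q.1 + q.2))).card with hC
  set N : ℕ := (((Sb ×ˢ E2) ×ˢ ((Sb ×ˢ E2) ×ˢ (Sb ×ˢ E2))).filter
      (fun q => phi q.1 + phi q.2.1 + phi q.2.2 = 0)).card with hNdef
  have hEC : E + C = Sb.card * Sb.card := by
    rw [hE, hC, ← Finset.card_product]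
    exact Finset.card_filter_add_card_filter_not _
  have hN : N ≤ 8 * C := Z3_le Sb hΩ
  have h1 : (∑ u ∈ Finset.univ.filter (allEven (n := n)),
        (∑ g ∈ Sb, (ipow (dot4 u g) + ipow (-(dot4 u g)))) ^ 2)
      = (2:ℂ)^n * ((4 * E : ℕ) : ℂ) := by
    rw [Finset.sum_congr rfl (fun u _ => by rw [sigma_eq]), sq_eq, W2_card, hE]
  have h2 : (∑ u : Fin n → ZMod 4,
        (∑ g ∈ Sb, (ipow (dot4 u g) + ipow (-(dot4 u g)))) ^ 3)
      = (4:ℂ)^n * ((N : ℕ) : ℂ) := by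
    rw [Finset.sum_congr rfl (fun u _ => by rw [sigma_eq]), cube_eq, hNdef]
  have hL : 3 * 2 ^ n *
        (∑ u ∈ Finset.univ.filter (allEven (n := n)),
          (∑ g ∈ Sb, (ipow (dot4 u g) + ipow (-(dot4 u g)))) ^ 2) +
      (∑ u : Fin n → ZMod 4,
          (∑ g ∈ Sb, (ipow (dot4 u g) + ipow (-(dot4 u g)))) ^ 3)
      = ((2 ^ (2 * n) * (12 * E + N) : ℕ) : ℂ) := by
    rw [h1, h2]
    push_cast
    rw [show ((4:ℂ))^n = (2:ℂ)^n * 2^n by rw [show (4:ℂ) = 2*2 by norm_num, mul_pow],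
      two_mul, pow_add]
    ring
  have hR : 3 * 2 ^ (2 * n + 2) * (Sb.card : ℂ) ^ 2
      = ((2 ^ (2 * n) * (12 * (Sb.card * Sb.card)) : ℕ) : ℂ) := by
    push_cast
    rw [pow_add]
    ring
  have hpos : 0 < 2 ^ (2 * n) := Nat.pow_pos (by norm_num)
  constructor
  · rw [hL, hR]
    exact_mod_cast Nat.cast_le.mpr (Nat.mul_le_mul le_rfl (by omega))
  · rw [hL, hR, Nat.cast_inj]
    have hCiff : C = 0 ↔ ∀ g ∈ Sb, ∀ g' ∈ Sb, allEven (g + g') := by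
      rw [hC, Finset.card_eq_zero, Finset.filter_eq_empty_iff]
      constructor
      · intro h g hg g' hg'
        have hmem : (g, g') ∈ Sb ×ˢ Sb := Finset.mem_product.mpr ⟨hg, hg'⟩
        have := h hmem
        simpa using this
      · rintro h ⟨g, g'⟩ hq
        simp only [not_not]
        obtain ⟨hg, hg'⟩ := Finset.mem_product.1 hq
        exact h g hg g' hg'
    constructor
    · intro h
      have := Nat.eq_of_mul_eq_mul_left hpos h
      exact hCiff.1 (by omega)
    · intro h
      have hC0 : C = 0 := hCiff.2 h
      have : 12 * E + N = 12 * (Sb.card * Sb.card) := by omega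
      rw [this]
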